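/- Let u ∈ C¹[0,R] with u(R) = 0 and u not identically zero, let a be continuous and positive on (0,R] with a(0)=0, and let G(x)=∫₀ˣ a(s)^{n-1} ds. Then ∫₀ᴿ u(x)² a(x)^{n-1} dx < 4 ∫₀ᴿ G(x)² u'(x)² / a(x)^{n-1} dx, provided both integrals are finite. -/

import Mathlib

open Set MeasureTheory intervalIntegral Filter Topology

/-- If a function is continuous on an open interval and vanishes a.e. on the
corresponding `Ioc`, it vanishes everywhere on the open interval. -/
lemma aux_eq_zero_of_ae_zero {φ : ℝ → ℝ} {A B : ℝ} (hφ : ContinuousOn φ (Set.Ioo A B))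
    (h : φ =ᵐ[MeasureTheory.volume.restrict (Set.Ioc A B)] 0) :
    ∀ x ∈ Set.Ioo A B, φ x = 0 := by
  intro x hx
  by_contra hne
  have hU : IsOpen (Set.Ioo A B ∩ φ ⁻¹' ({0}ᶜ)) :=
    hφ.isOpen_inter_preimage isOpen_Ioo isOpen_compl_singleton
  obtain ⟨ε, hε, hball⟩ := Metric.isOpen_iff.mp hU x ⟨hx, hne⟩
  have h' : ∀ᵐ y ∂(MeasureTheory.volume.restrict (Set.Ioc A B)), φ y = 0 := by
    filter_upwards [h] with y hy using hy
  have hnull : MeasureTheory.volume ({y | ¬ φ y = 0} ∩ Set.Ioc A B) = 0 := by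
    have := MeasureTheory.ae_iff.mp h'
    rwa [MeasureTheory.Measure.restrict_apply' measurableSet_Ioc] at this
  have hsub : Metric.ball x ε ⊆ {y | ¬ φ y = 0} ∩ Set.Ioc A B := by
    intro y hy
    have h2 := hball hy
    exact ⟨h2.2, Set.Ioo_subset_Ioc_self h2.1⟩
  have hz : MeasureTheory.volume (Metric.ball x ε) = 0 :=
    le_antisymm (hnull ▸ MeasureTheory.measure_mono hsub) (zero_le)
  rw [Real.volume_ball] at hz
  simp only [ENNReal.ofReal_eq_zero] at hz
  linarith

set_option maxHeartbeats 1000000 in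
theorem stmt_2 (R : ℝ) (hR : 0 < R) (n : ℕ) (hn : 2 < n)
    (a : ℝ → ℝ) (ha : ContinuousOn a (Set.Icc 0 R))
    (ha0 : a 0 = 0)
    (hapos : ∀ x ∈ Set.Ioc (0:ℝ) R, 0 < a x)
    (u : ℝ → ℝ) (hu : ContDiffOn ℝ 1 u (Set.Icc 0 R))
    (huR : u R = 0)
    (hune : ∃ x ∈ Set.Icc (0:ℝ) R, u x ≠ 0)
    (hint1 : IntervalIntegrable (fun x => u x ^ 2 * a x ^ (n - 1)) MeasureTheory.volume 0 R)
    (hint2 : IntervalIntegrable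
      (fun x => (∫ s in (0:ℝ)..x, a s ^ (n - 1)) ^ 2 * (deriv u x) ^ 2 / a x ^ (n - 1))
      MeasureTheory.volume 0 R) :
    (∫ x in (0:ℝ)..R, u x ^ 2 * a x ^ (n - 1)) <
      4 * ∫ x in (0:ℝ)..R,
        (∫ s in (0:ℝ)..x, a s ^ (n - 1)) ^ 2 * (deriv u x) ^ 2 / a x ^ (n - 1) := by
  by_contra hcon
  push_neg at hcon
  -- Abbreviations
  set P : ℝ → ℝ := fun x => a x ^ (n - 1) with hPdef
  set Gf : ℝ → ℝ := fun x => ∫ s in (0:ℝ)..x, a s ^ (n - 1) with hGdef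
  set w : ℝ → ℝ := fun x => u x * deriv u x * Gf x with hwdef
  set f : ℝ → ℝ := fun x => |w x| with hfdef
  set g : ℝ → ℝ := fun x => (1/4) * (u x ^ 2 * P x) + Gf x ^ 2 * (deriv u x) ^ 2 / P x
    with hgdef
  set A : ℝ := ∫ x in (0:ℝ)..R, u x ^ 2 * P x with hAdef
  set B : ℝ := ∫ x in (0:ℝ)..R, Gf x ^ 2 * (deriv u x) ^ 2 / P x with hBdef
  have hcon' : 4 * B ≤ A := hcon
  have hint1' : IntervalIntegrable (fun x => u x ^ 2 * P x) MeasureTheory.volume 0 R := hint1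
  have hint2' : IntervalIntegrable (fun x => Gf x ^ 2 * (deriv u x) ^ 2 / P x)
      MeasureTheory.volume 0 R := hint2
  -- Basic facts about P
  have hPcont : ContinuousOn P (Set.Icc 0 R) := ha.pow _
  have hP0 : P 0 = 0 := by
    simp only [hPdef, ha0]
    exact zero_pow (by omega)
  have hPpos : ∀ x ∈ Set.Ioc (0:ℝ) R, 0 < P x := fun x hx => pow_pos (hapos x hx) _
  have hPint : ∀ x ∈ Set.Icc (0:ℝ) R, IntervalIntegrable P MeasureTheory.volume 0 x := by
    intro x hx
    apply ContinuousOn.intervalIntegrable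
    rw [Set.uIcc_of_le hx.1]
    exact hPcont.mono (Set.Icc_subset_Icc le_rfl hx.2)
  -- Basic facts about Gf
  have hGcont : ContinuousOn Gf (Set.Icc 0 R) := by
    have h1 : IntegrableOn (fun s => a s ^ (n - 1)) (Set.uIcc 0 R) MeasureTheory.volume := by
      rw [Set.uIcc_of_le hR.le]
      exact hPcont.integrableOn_Icc
    have := intervalIntegral.continuousOn_primitive_interval (f := fun s => a s ^ (n - 1))
      (a := 0) (b := R) (μ := MeasureTheory.volume) h1
    rwa [Set.uIcc_of_le hR.le] at this
  have hG0 : Gf 0 = 0 := intervalIntegral.integral_same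
  have hGpos : ∀ x ∈ Set.Ioc (0:ℝ) R, 0 < Gf x := by
    intro x hx
    exact intervalIntegral_pos_of_pos_on (hPint x ⟨hx.1.le, hx.2⟩)
      (fun y hy => hPpos y ⟨hy.1, hy.2.le.trans hx.2⟩) hx.1
  have hGnonneg : ∀ x ∈ Set.Icc (0:ℝ) R, 0 ≤ Gf x := by
    intro x hx
    rcases eq_or_lt_of_le hx.1 with h0 | h0
    · rw [← h0, hG0]
    · exact (hGpos x ⟨h0, hx.2⟩).le
  have hGderiv : ∀ x ∈ Set.Ioo (0:ℝ) R, HasDerivAt Gf (P x) x := by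
    intro x hx
    have hct : ContinuousAt P x := hPcont.continuousAt (Icc_mem_nhds hx.1 hx.2)
    exact intervalIntegral.integral_hasDerivAt_right (hPint x ⟨hx.1.le, hx.2.le⟩)
      (ContinuousOn.stronglyMeasurableAtFilter isOpen_Ioo
        (hPcont.mono Set.Ioo_subset_Icc_self) x hx) hct
  -- Basic facts about u
  have hucont : ContinuousOn u (Set.Icc 0 R) := hu.continuousOn
  have huderiv : ∀ x ∈ Set.Ioo (0:ℝ) R, HasDerivAt u (deriv u x) x := by
    intro x hx
    exact ((hu.differentiableOn one_ne_zero x (Set.Ioo_subset_Icc_self hx)).differentiableAt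
      (Icc_mem_nhds hx.1 hx.2)).hasDerivAt
  have hu'cont : ContinuousOn (deriv u) (Set.Ioo 0 R) := by
    have h1 : ContinuousOn (derivWithin u (Set.Icc 0 R)) (Set.Icc 0 R) :=
      hu.continuousOn_derivWithin (uniqueDiffOn_Icc hR) le_rfl
    exact (h1.mono Set.Ioo_subset_Icc_self).congr
      (fun x hx => (derivWithin_of_mem_nhds (Icc_mem_nhds hx.1 hx.2)).symm)
  -- pointwise inequality f ≤ g on [0, R]
  have hfg : ∀ x ∈ Set.Icc (0:ℝ) R, f x ≤ g x := by
    intro x hx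
    rcases eq_or_lt_of_le hx.1 with h0 | h0
    · simp only [hfdef, hwdef, hgdef, ← h0, hG0, hP0]
      norm_num
    · have hP := hPpos x ⟨h0, hx.2⟩
      have hG := hGnonneg x hx
      simp only [hfdef, hwdef, hgdef]
      rw [← sub_le_iff_le_add', le_div_iff₀ hP]
      have habs : |u x * deriv u x * Gf x| = |u x| * |deriv u x| * Gf x := by
        rw [abs_mul, abs_mul, abs_of_nonneg hG]
      rw [habs, ← sq_abs (u x), ← sq_abs (deriv u x)]
      nlinarith [sq_nonneg (|u x| * P x - 2 * |deriv u x| * Gf x)]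
  -- integrability
  have hg_int : IntervalIntegrable g MeasureTheory.volume 0 R := (hint1'.const_mul (1/4)).add hint2'
  have hw_meas : AEStronglyMeasurable w (MeasureTheory.volume.restrict (Set.Ioc 0 R)) := by
    apply AEStronglyMeasurable.mul
    apply AEStronglyMeasurable.mul
    · exact (hucont.mono Set.Ioc_subset_Icc_self).aestronglyMeasurable measurableSet_Ioc
    · exact ((measurable_deriv u).aestronglyMeasurable).restrict
    · exact (hGcont.mono Set.Ioc_subset_Icc_self).aestronglyMeasurable measurableSet_Ioc
  have hgIntOn : IntegrableOn g (Set.Ioc 0 R) MeasureTheory.volume :=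
    (intervalIntegrable_iff_integrableOn_Ioc_of_le hR.le).1 hg_int
  have hw_intOn : IntegrableOn w (Set.Ioc 0 R) MeasureTheory.volume := by
    apply hgIntOn.mono' hw_meas
    rw [MeasureTheory.ae_restrict_iff' measurableSet_Ioc]
    filter_upwards with x hx
    have h1 := hfg x (Set.Ioc_subset_Icc_self hx)
    simpa [hfdef, Real.norm_eq_abs] using h1
  have hw_int : IntervalIntegrable w MeasureTheory.volume 0 R :=
    (intervalIntegrable_iff_integrableOn_Ioc_of_le hR.le).2 hw_intOn
  have hf_int : IntervalIntegrable f MeasureTheory.volume 0 R := hw_int.abs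
  -- derivative of F := u^2 * Gf
  have hFderiv : ∀ x ∈ Set.Ioo (0:ℝ) R,
      HasDerivAt (fun y => u y ^ 2 * Gf y) (2 * w x + u x ^ 2 * P x) x := by
    intro x hx
    have h1 := ((huderiv x hx).fun_pow 2).fun_mul (hGderiv x hx)
    refine h1.congr_deriv ?_
    simp only [hwdef]
    ring
  -- integration by parts / FTC
  have hIBP : (∫ x in (0:ℝ)..R, (2 * w x + u x ^ 2 * P x)) = 0 := by
    have h1 := intervalIntegral.integral_eq_sub_of_hasDeriv_right_of_le (f := fun y => u y ^ 2 * Gf y) hR.le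
      ((hucont.pow 2).mul hGcont)
      (fun x hx => (hFderiv x hx).hasDerivWithinAt)
      ((hw_int.const_mul 2).add hint1')
    rw [h1, huR, hG0]
    ring
  have hA : A = -(2 * ∫ x in (0:ℝ)..R, w x) := by
    rw [intervalIntegral.integral_add (hw_int.const_mul 2) hint1',
      intervalIntegral.integral_const_mul] at hIBP
    rw [hAdef]
    linarith
  -- the chain of inequalities
  have h2 : -(∫ x in (0:ℝ)..R, w x) ≤ ∫ x in (0:ℝ)..R, f x := by
    have h := intervalIntegral.abs_integral_le_integral_abs (f := w) (μ := MeasureTheory.volume) hR.le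
    calc -(∫ x in (0:ℝ)..R, w x) ≤ |∫ x in (0:ℝ)..R, w x| := neg_le_abs _
      _ ≤ ∫ x in (0:ℝ)..R, |w x| := h
      _ = ∫ x in (0:ℝ)..R, f x := rfl
  have h3 : (∫ x in (0:ℝ)..R, f x) ≤ ∫ x in (0:ℝ)..R, g x :=
    intervalIntegral.integral_mono_on hR.le hf_int hg_int hfg
  have h4 : (∫ x in (0:ℝ)..R, g x) = (1/4) * A + B := by
    rw [hgdef]
    rw [intervalIntegral.integral_add (hint1'.const_mul (1/4)) hint2',
      intervalIntegral.integral_const_mul]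
  have hfa : (∫ x in (0:ℝ)..R, f x) = A / 2 := by linarith
  have hga : (∫ x in (0:ℝ)..R, g x) = A / 2 := by linarith
  have hwa : (∫ x in (0:ℝ)..R, w x) = -(A / 2) := by linarith
  -- zero integrals
  have hzero1 : (∫ x in (0:ℝ)..R, (f x + w x)) = 0 := by
    rw [intervalIntegral.integral_add hf_int hw_int]; linarith
  have hzero2 : (∫ x in (0:ℝ)..R, (g x - f x)) = 0 := by
    rw [intervalIntegral.integral_sub hg_int hf_int]; linarith
  -- a.e. vanishing
  have hae1 : (fun x => f x + w x) =ᵐ[MeasureTheory.volume.restrict (Set.Ioc 0 R)] 0 := by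
    refine (intervalIntegral.integral_eq_zero_iff_of_le_of_nonneg_ae hR.le ?_
      (hf_int.add hw_int)).mp hzero1
    refine Filter.Eventually.of_forall (fun x => ?_)
    simp only [hfdef, Pi.zero_apply]
    have := neg_abs_le (w x)
    linarith
  have hae2 : (fun x => g x - f x) =ᵐ[MeasureTheory.volume.restrict (Set.Ioc 0 R)] 0 := by
    refine (intervalIntegral.integral_eq_zero_iff_of_le_of_nonneg_ae hR.le ?_
      (hg_int.sub hf_int)).mp hzero2
    rw [Filter.EventuallyLE, MeasureTheory.ae_restrict_iff' measurableSet_Ioc]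
    filter_upwards with x hx
    have := hfg x (Set.Ioc_subset_Icc_self hx)
    simp only [Pi.zero_apply]
    linarith
  -- continuity on the open interval
  have hucontO : ContinuousOn u (Set.Ioo 0 R) := hucont.mono Set.Ioo_subset_Icc_self
  have hGcontO : ContinuousOn Gf (Set.Ioo 0 R) := hGcont.mono Set.Ioo_subset_Icc_self
  have hPcontO : ContinuousOn P (Set.Ioo 0 R) := hPcont.mono Set.Ioo_subset_Icc_self
  have hPneO : ∀ x ∈ Set.Ioo (0:ℝ) R, P x ≠ 0 :=
    fun x hx => (hPpos x ⟨hx.1, hx.2.le⟩).ne'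
  have hwcontO : ContinuousOn w (Set.Ioo 0 R) := (hucontO.mul hu'cont).mul hGcontO
  have hfcontO : ContinuousOn f (Set.Ioo 0 R) := hwcontO.abs
  have hgcontO : ContinuousOn g (Set.Ioo 0 R) := by
    apply ContinuousOn.add
    · exact continuousOn_const.mul ((hucontO.pow 2).mul hPcontO)
    · exact ((hGcontO.pow 2).mul (hu'cont.pow 2)).div hPcontO hPneO
  -- pointwise vanishing on the open interval
  have hfw0 : ∀ x ∈ Set.Ioo (0:ℝ) R, f x + w x = 0 :=
    aux_eq_zero_of_ae_zero (hfcontO.add hwcontO) hae1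
  have hgf0 : ∀ x ∈ Set.Ioo (0:ℝ) R, g x - f x = 0 :=
    aux_eq_zero_of_ae_zero (hgcontO.sub hfcontO) hae2
  -- the derivative of u^2 * Gf vanishes on (0, R)
  have hder0 : ∀ x ∈ Set.Ioo (0:ℝ) R, HasDerivAt (fun y => u y ^ 2 * Gf y) 0 x := by
    intro x hx
    have h := hFderiv x hx
    have hP := hPpos x ⟨hx.1, hx.2.le⟩
    have hG := hGnonneg x (Set.Ioo_subset_Icc_self hx)
    have e1 := hgf0 x hx
    have e2 := hfw0 x hx
    simp only [hgdef, hfdef, hwdef] at e1 e2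
    have habs : |u x * deriv u x * Gf x| = |u x| * |deriv u x| * Gf x := by
      rw [abs_mul, abs_mul, abs_of_nonneg hG]
    have e1a : Gf x ^ 2 * (deriv u x) ^ 2 / P x
        = |u x| * |deriv u x| * Gf x - 1/4 * (u x ^ 2 * P x) := by
      rw [← habs]; linarith
    have e1' : Gf x ^ 2 * (deriv u x) ^ 2
        = (|u x| * |deriv u x| * Gf x - 1/4 * (u x ^ 2 * P x)) * P x := by
      rw [← e1a, div_mul_cancel₀ _ hP.ne']
    have hu2 : |u x| ^ 2 = u x ^ 2 := sq_abs _
    have hv2 : |deriv u x| ^ 2 = (deriv u x) ^ 2 := sq_abs _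
    have h0 : (|u x| * P x - 2 * |deriv u x| * Gf x) ^ 2 = 0 := by
      linear_combination P x ^ 2 * hu2 + 4 * Gf x ^ 2 * hv2 + 4 * e1'
    have heq : |u x| * P x = 2 * |deriv u x| * Gf x := by
      have h1 := pow_eq_zero_iff (n := 2) (by norm_num) |>.mp h0
      linarith
    have hkey0 : u x ^ 2 * P x = 2 * (|u x| * |deriv u x| * Gf x) := by
      calc u x ^ 2 * P x = |u x| * (|u x| * P x) := by rw [← sq_abs]; ring
        _ = |u x| * (2 * |deriv u x| * Gf x) := by rw [heq]
        _ = 2 * (|u x| * |deriv u x| * Gf x) := by ring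
    have hkey : 2 * w x + u x ^ 2 * P x = 0 := by
      simp only [hwdef]
      rw [habs] at e2
      linarith
    rw [hkey] at h
    exact h
  -- u vanishes on (0, R)
  have hu0 : ∀ c ∈ Set.Ioo (0:ℝ) R, u c = 0 := by
    intro c hc
    have hconst := constant_of_has_deriv_right_zero (f := fun y => u y ^ 2 * Gf y)
      (a := c) (b := R)
      (((hucont.mono (Set.Icc_subset_Icc hc.1.le le_rfl)).pow 2).mul
        (hGcont.mono (Set.Icc_subset_Icc hc.1.le le_rfl)))
      (fun x hx => (hder0 x ⟨lt_of_lt_of_le hc.1 hx.1, hx.2⟩).hasDerivWithinAt)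
    have hre := hconst R ⟨hc.2.le, le_rfl⟩
    simp only [huR] at hre
    have hGc := hGpos c ⟨hc.1, hc.2.le⟩
    have : u c ^ 2 * Gf c = 0 := by
      rw [← hre]; ring
    have hsq : u c ^ 2 = 0 := by
      rcases mul_eq_zero.mp this with h | h
      · exact h
      · exact absurd h hGc.ne'
    exact pow_eq_zero_iff (n := 2) (by norm_num) |>.mp hsq
  -- u also vanishes at 0, by continuity
  have hu00 : u 0 = 0 := by
    have hne : (𝓝[Set.Ioo (0:ℝ) R] (0:ℝ)).NeBot := by
      apply mem_closure_iff_nhdsWithin_neBot.mp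
      rw [closure_Ioo hR.ne]
      exact ⟨le_rfl, hR.le⟩
    have ht1 : Filter.Tendsto u (𝓝[Set.Ioo (0:ℝ) R] 0) (𝓝 (u 0)) :=
      ((hucont 0 ⟨le_rfl, hR.le⟩).mono Set.Ioo_subset_Icc_self).tendsto
    have ht2 : Filter.Tendsto u (𝓝[Set.Ioo (0:ℝ) R] 0) (𝓝 0) := by
      apply Filter.Tendsto.congr' _ tendsto_const_nhds
      filter_upwards [eventually_mem_nhdsWithin] with x hx
      exact (hu0 x hx).symm
    exact tendsto_nhds_unique ht1 ht2
  -- contradiction with hune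
  obtain ⟨x₁, hx₁, hx₁ne⟩ := hune
  rcases eq_or_lt_of_le hx₁.1 with h0 | h0
  · exact hx₁ne (h0 ▸ hu00)
  rcases eq_or_lt_of_le hx₁.2 with hRR | hRR
  · exact hx₁ne (hRR ▸ huR)
  exact hx₁ne (hu0 x₁ ⟨h0, hRR⟩)
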